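/- For any graph G of order n with no isolated vertices, n/(2(n-1)) ≤ R_{-1}(G) ≤ ⌊n/2⌋, with equality in the lower bound if and only if G is complete. -/

import Mathlib

open BigOperators

noncomputable section
open scoped Classical

/-- The general Randić index `R₋₁(G) = Σ_{uv ∈ E(G)} 1/(d_u d_v)` (over unordered
edges), written as half the sum over ordered adjacent pairs. -/
def randicIndexNegOne {V : Type} [Fintype V] (G : SimpleGraph V) : ℝ :=
  (1 / 2) * ∑ k, ∑ l, if G.Adj k l then ((G.degree k : ℝ) * (G.degree l : ℝ))⁻¹ else 0

namespace RandicNegOneAux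

open Finset

variable {V : Type} [Fintype V] (G : SimpleGraph V)

/-- per-vertex sum -/
private def F (v : V) : ℝ :=
  ∑ l ∈ G.neighborFinset v, ((G.degree v : ℝ) * (G.degree l : ℝ))⁻¹

private lemma sum_ite_eq_F (k : V) :
    (∑ l, if G.Adj k l then ((G.degree k : ℝ) * (G.degree l : ℝ))⁻¹ else 0) = F G k := by
  rw [F, SimpleGraph.neighborFinset_eq_filter, Finset.sum_filter]

private lemma dpos (hiso : ∀ v, 0 < G.degree v) (v : V) : (0:ℝ) < (G.degree v : ℝ) := by
  exact_mod_cast hiso v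

private lemma done' (hiso : ∀ v, 0 < G.degree v) (v : V) : (1:ℝ) ≤ (G.degree v : ℝ) := by
  exact_mod_cast hiso v

private lemma F_le_one (hiso : ∀ v, 0 < G.degree v) (v : V) : F G v ≤ 1 := by
  have hd := dpos G hiso v
  calc F G v ≤ ∑ l ∈ G.neighborFinset v, ((G.degree v : ℝ))⁻¹ := by
        refine Finset.sum_le_sum fun l _ => ?_
        rw [mul_inv]
        have h1 : ((G.degree l : ℝ))⁻¹ ≤ 1 := inv_le_one_of_one_le₀ (done' G hiso l)
        calc ((G.degree v : ℝ))⁻¹ * ((G.degree l : ℝ))⁻¹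
            ≤ ((G.degree v : ℝ))⁻¹ * 1 := by
              exact mul_le_mul_of_nonneg_left h1 (le_of_lt (inv_pos.mpr hd))
          _ = ((G.degree v : ℝ))⁻¹ := mul_one _
    _ = 1 := by
        rw [Finset.sum_const, G.card_neighborFinset_eq_degree, nsmul_eq_mul,
          mul_inv_cancel₀ (ne_of_gt hd)]

private lemma deg_le_sub_one [Nonempty V] (v : V) :
    (G.degree v : ℝ) ≤ (Fintype.card V : ℝ) - 1 := by
  have h := G.degree_lt_card_verts v
  have h1 : (1:ℕ) ≤ Fintype.card V := Fintype.card_pos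
  have h2 : G.degree v ≤ Fintype.card V - 1 := by omega
  have h3 := (Nat.cast_le (α := ℝ)).mpr h2
  rwa [Nat.cast_sub h1, Nat.cast_one] at h3

private lemma F_lower (hiso : ∀ v, 0 < G.degree v) [Nonempty V] (v : V) :
    ((Fintype.card V : ℝ) - 1)⁻¹ ≤ F G v := by
  have hd := dpos G hiso v
  calc ((Fintype.card V : ℝ) - 1)⁻¹
      = ∑ l ∈ G.neighborFinset v, ((G.degree v : ℝ))⁻¹ * ((Fintype.card V : ℝ) - 1)⁻¹ := by
        rw [Finset.sum_const, G.card_neighborFinset_eq_degree, nsmul_eq_mul, ← mul_assoc,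
          mul_inv_cancel₀ (ne_of_gt hd), one_mul]
    _ ≤ F G v := by
        refine Finset.sum_le_sum fun l _ => ?_
        rw [mul_inv]
        exact mul_le_mul_of_nonneg_left
          (inv_anti₀ (dpos G hiso l) (deg_le_sub_one G l)) (le_of_lt (inv_pos.mpr hd))

private lemma F_lower_strict (hiso : ∀ v, 0 < G.degree v) [Nonempty V] (u v : V)
    (hu : (G.degree u : ℝ) < (Fintype.card V : ℝ) - 1) (hv : G.Adj v u) :
    ((Fintype.card V : ℝ) - 1)⁻¹ < F G v := by
  have hd := dpos G hiso v
  have key : ∑ l ∈ G.neighborFinset v, ((G.degree v : ℝ))⁻¹ * ((Fintype.card V : ℝ) - 1)⁻¹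
      < F G v := by
    refine Finset.sum_lt_sum (fun l _ => ?_) ⟨u, (G.mem_neighborFinset v u).mpr hv, ?_⟩
    · rw [mul_inv]
      exact mul_le_mul_of_nonneg_left
        (inv_anti₀ (dpos G hiso l) (deg_le_sub_one G l)) (le_of_lt (inv_pos.mpr hd))
    · rw [mul_inv]
      exact mul_lt_mul_of_pos_left (by exact inv_strictAnti₀ (dpos G hiso u) hu)
        (inv_pos.mpr hd)
  calc ((Fintype.card V : ℝ) - 1)⁻¹
      = ∑ l ∈ G.neighborFinset v, ((G.degree v : ℝ))⁻¹ * ((Fintype.card V : ℝ) - 1)⁻¹ := by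
        rw [Finset.sum_const, G.card_neighborFinset_eq_degree, nsmul_eq_mul, ← mul_assoc,
          mul_inv_cancel₀ (ne_of_gt hd), one_mul]
    _ < F G v := key

private lemma F_const (hn1 : (0:ℝ) < (Fintype.card V : ℝ) - 1)
    (hd : ∀ w : V, (G.degree w : ℝ) = (Fintype.card V : ℝ) - 1) (v : V) :
    F G v = ((Fintype.card V : ℝ) - 1)⁻¹ := by
  calc F G v
      = ∑ _l ∈ G.neighborFinset v,
          (((Fintype.card V : ℝ) - 1) * ((Fintype.card V : ℝ) - 1))⁻¹ :=
        Finset.sum_congr rfl (fun l _ => by rw [hd v, hd l])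
    _ = ((Fintype.card V : ℝ) - 1)⁻¹ := by
        rw [Finset.sum_const, G.card_neighborFinset_eq_degree, nsmul_eq_mul, hd v,
          mul_inv, ← mul_assoc, mul_inv_cancel₀ (ne_of_gt hn1), one_mul]

private lemma degree_of_top (hG : G = ⊤) (w : V) : G.degree w = Fintype.card V - 1 := by
  rw [← G.card_neighborFinset_eq_degree, SimpleGraph.neighborFinset_eq_filter]
  have h : Finset.univ.filter (fun u => G.Adj w u) = Finset.univ.erase w := by
    ext u
    simp only [Finset.mem_filter, Finset.mem_univ, true_and, hG, SimpleGraph.top_adj,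
      Finset.mem_erase, and_true]
    exact ne_comm
  rw [h, Finset.card_erase_of_mem (Finset.mem_univ w), Finset.card_univ]

private def T : Finset V :=
  Finset.univ.filter (fun v => ¬ (G.degree v = 1 ∧ ∀ u, G.Adj v u → G.degree u = 1))

private def B (v : V) : Finset V := (G.neighborFinset v).filter (fun u => G.degree u = 1)

private lemma T_closed {v u : V} (hv : v ∈ T G) (hadj : G.Adj v u) : u ∈ T G := by
  by_contra hu
  rw [T, Finset.mem_filter] at hu hv
  push_neg at hu
  obtain ⟨h1, h2⟩ := hu (Finset.mem_univ u)
  apply hv.2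
  have hdv : G.degree v = 1 := h2 v hadj.symm
  refine ⟨hdv, fun w hw => ?_⟩
  have hcard : (G.neighborFinset v).card = 1 := by rw [G.card_neighborFinset_eq_degree]; exact hdv
  obtain ⟨a, ha⟩ := Finset.card_eq_one.mp hcard
  have hu' : u ∈ G.neighborFinset v := (G.mem_neighborFinset v u).mpr hadj
  have hw' : w ∈ G.neighborFinset v := (G.mem_neighborFinset v w).mpr hw
  rw [ha, Finset.mem_singleton] at hu' hw'
  rw [hw', ← hu', h1]

private lemma B_empty_of_deg_one {v : V} (hv : v ∈ T G) (h1 : G.degree v = 1) :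
    B G v = ∅ := by
  rw [T, Finset.mem_filter] at hv
  have h := hv.2
  push_neg at h
  obtain ⟨u, hu, hune⟩ := h h1
  have hcard : (G.neighborFinset v).card = 1 := by rw [G.card_neighborFinset_eq_degree]; exact h1
  obtain ⟨a, ha⟩ := Finset.card_eq_one.mp hcard
  rw [B, Finset.eq_empty_iff_forall_notMem]
  intro w hw
  rw [Finset.mem_filter] at hw
  have hw' := hw.1
  have hu' : u ∈ G.neighborFinset v := (G.mem_neighborFinset v u).mpr hu
  rw [ha, Finset.mem_singleton] at hw' hu'
  exact hune (by rw [hu', ← hw']; exact hw.2)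

private lemma exists_deg_two (hiso : ∀ v, 0 < G.degree v) (hT : (T G).Nonempty) :
    ∃ v ∈ T G, 2 ≤ G.degree v := by
  obtain ⟨v, hv⟩ := hT
  by_cases h2 : 2 ≤ G.degree v
  · exact ⟨v, hv, h2⟩
  · have h1 : G.degree v = 1 := by have := hiso v; omega
    have hv' := hv
    rw [T, Finset.mem_filter] at hv'
    have h := hv'.2
    push_neg at h
    obtain ⟨u, hu, hune⟩ := h h1
    exact ⟨u, T_closed G hv hu, by have := hiso u; omega⟩

private lemma card_T_ge_three (hiso : ∀ v, 0 < G.degree v) (hT : (T G).Nonempty) :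
    3 ≤ (T G).card := by
  obtain ⟨v, hv⟩ := hT
  have hnv : (G.neighborFinset v).Nonempty := by
    rw [← Finset.card_pos, G.card_neighborFinset_eq_degree]; exact hiso v
  obtain ⟨u, hu⟩ := hnv
  have hadj : G.Adj v u := (G.mem_neighborFinset v u).mp hu
  have huT : u ∈ T G := T_closed G hv hadj
  have hne : u ≠ v := fun h => G.irrefl (h ▸ hadj)
  have hsub : ({v, u} : Finset V) ⊆ T G := by
    intro x hx
    rw [Finset.mem_insert, Finset.mem_singleton] at hx
    rcases hx with h | h
    · exact h ▸ hv
    · exact h ▸ huT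
  have hcard2 : ({v, u} : Finset V).card = 2 := by
    rw [Finset.card_insert_of_notMem (by simpa using hne.symm), Finset.card_singleton]
  have hge2 : 2 ≤ (T G).card := hcard2 ▸ Finset.card_le_card hsub
  by_contra hlt
  have hTeq : T G = {v, u} :=
    (Finset.eq_of_subset_of_card_le hsub (by omega)).symm
  have hdeg : ∀ x y : V, x ∈ T G → ({v, u} : Finset V) = {x, y} →
      G.degree x = 1 := by
    intro x y hx hxy2
    have hsub2 : G.neighborFinset x ⊆ {y} := by
      intro w hw
      have hwadj : G.Adj x w := (G.mem_neighborFinset x w).mp hw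
      have hwT : w ∈ T G := T_closed G hx hwadj
      rw [hTeq, hxy2, Finset.mem_insert, Finset.mem_singleton] at hwT
      rcases hwT with h | h
      · exact absurd (h ▸ hwadj) G.irrefl
      · simpa using h
    have hle : G.degree x ≤ 1 := by
      rw [← G.card_neighborFinset_eq_degree]
      simpa using Finset.card_le_card hsub2
    have := hiso x
    omega
  have hdv : G.degree v = 1 := hdeg v u hv rfl
  have hdu : G.degree u = 1 := hdeg u v huT (by
    ext x; simp only [Finset.mem_insert, Finset.mem_singleton]; tauto)
  rw [T, Finset.mem_filter] at hv
  apply hv.2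
  refine ⟨hdv, fun w hw => ?_⟩
  have hcard : (G.neighborFinset v).card = 1 := by rw [G.card_neighborFinset_eq_degree]; exact hdv
  obtain ⟨a, ha⟩ := Finset.card_eq_one.mp hcard
  have hw' : w ∈ G.neighborFinset v := (G.mem_neighborFinset v w).mpr hw
  rw [ha, Finset.mem_singleton] at hw' hu
  rw [hw', ← hu]
  exact hdu

private lemma sum_B_le :
    ∑ v ∈ T G, (B G v).card ≤ ((T G).filter (fun u => G.degree u = 1)).card := by
  have step1 : ∀ v, (B G v).card
      = ∑ u, if G.Adj v u then (if G.degree u = 1 then 1 else 0) else 0 := by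
    intro v
    rw [B, Finset.card_filter, SimpleGraph.neighborFinset_eq_filter, Finset.sum_filter]
  calc ∑ v ∈ T G, (B G v).card
      = ∑ v ∈ T G, ∑ u, if G.Adj v u then (if G.degree u = 1 then 1 else 0) else 0 :=
        Finset.sum_congr rfl fun v _ => step1 v
    _ = ∑ u, ∑ v ∈ T G, if G.Adj v u then (if G.degree u = 1 then 1 else 0) else 0 :=
        Finset.sum_comm
    _ ≤ ∑ u, (if u ∈ (T G).filter (fun u => G.degree u = 1) then 1 else 0) := by
        refine Finset.sum_le_sum fun u _ => ?_
        by_cases hdeg : G.degree u = 1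
        · simp only [hdeg, if_true]
          have hform : (∑ v ∈ T G, if G.Adj v u then 1 else 0)
              = ((T G).filter (fun v => G.Adj v u)).card := (Finset.card_filter _ _).symm
          rw [hform]
          by_cases hne : ((T G).filter (fun v => G.Adj v u)).Nonempty
          · obtain ⟨v, hv⟩ := hne
            rw [Finset.mem_filter] at hv
            have huT : u ∈ T G := T_closed G hv.1 hv.2
            have hmem : u ∈ (T G).filter (fun u => G.degree u = 1) :=
              Finset.mem_filter.mpr ⟨huT, hdeg⟩
            rw [if_pos hmem]
            have hsub : ((T G).filter (fun v => G.Adj v u)) ⊆ G.neighborFinset u := by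
              intro w hw
              rw [Finset.mem_filter] at hw
              exact (G.mem_neighborFinset u w).mpr hw.2.symm
            have hle := Finset.card_le_card hsub
            rw [G.card_neighborFinset_eq_degree, hdeg] at hle
            exact hle
          · rw [Finset.not_nonempty_iff_eq_empty] at hne
            rw [hne, Finset.card_empty]
            exact Nat.zero_le _
        · simp [hdeg]
    _ = ((T G).filter (fun u => G.degree u = 1)).card := by
        rw [Finset.sum_ite_mem, Finset.univ_inter, Finset.sum_const, smul_eq_mul, mul_one]

private lemma F_le_half (hiso : ∀ v, 0 < G.degree v) (v : V) :
    F G v ≤ 1/2 + ((B G v).card : ℝ) * (2 * (G.degree v : ℝ))⁻¹ := by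
  have hd := dpos G hiso v
  have hsplit := Finset.sum_filter_add_sum_filter_not (G.neighborFinset v)
    (fun u => G.degree u = 1) (fun l => ((G.degree v : ℝ) * (G.degree l : ℝ))⁻¹)
  have hB : ∑ l ∈ (G.neighborFinset v).filter (fun u => G.degree u = 1),
      ((G.degree v : ℝ) * (G.degree l : ℝ))⁻¹ = ((B G v).card : ℝ) * ((G.degree v : ℝ))⁻¹ := by
    rw [show ((G.neighborFinset v).filter (fun u => G.degree u = 1)) = B G v from rfl]
    rw [Finset.sum_congr rfl (fun l hl => ?_), Finset.sum_const, nsmul_eq_mul]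
    simp only [B, Finset.mem_filter] at hl
    rw [hl.2]
    norm_num
  have hC : ∑ l ∈ (G.neighborFinset v).filter (fun u => ¬ G.degree u = 1),
      ((G.degree v : ℝ) * (G.degree l : ℝ))⁻¹
      ≤ (((G.neighborFinset v).filter (fun u => ¬ G.degree u = 1)).card : ℝ)
        * (2 * (G.degree v : ℝ))⁻¹ := by
    calc ∑ l ∈ (G.neighborFinset v).filter (fun u => ¬ G.degree u = 1),
        ((G.degree v : ℝ) * (G.degree l : ℝ))⁻¹
        ≤ ∑ _l ∈ (G.neighborFinset v).filter (fun u => ¬ G.degree u = 1),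
          (2 * (G.degree v : ℝ))⁻¹ := by
          refine Finset.sum_le_sum fun l hl => ?_
          rw [Finset.mem_filter] at hl
          have h2 : (2:ℝ) ≤ (G.degree l : ℝ) := by
            have := hiso l; have := hl.2
            exact_mod_cast (by omega : 2 ≤ G.degree l)
          refine inv_anti₀ (by positivity) ?_
          calc (2:ℝ) * (G.degree v : ℝ) = (G.degree v : ℝ) * 2 := by ring
            _ ≤ (G.degree v : ℝ) * (G.degree l : ℝ) :=
                mul_le_mul_of_nonneg_left h2 (le_of_lt hd)
      _ = _ := by rw [Finset.sum_const, nsmul_eq_mul]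
  have hcards : (B G v).card
      + ((G.neighborFinset v).filter (fun u => ¬ G.degree u = 1)).card = G.degree v := by
    rw [show (B G v) = (G.neighborFinset v).filter (fun u => G.degree u = 1) from rfl]
    rw [Finset.card_filter_add_card_filter_not, G.card_neighborFinset_eq_degree]
  have hcardsR : ((B G v).card : ℝ)
      + (((G.neighborFinset v).filter (fun u => ¬ G.degree u = 1)).card : ℝ)
      = (G.degree v : ℝ) := by exact_mod_cast hcards
  have hF : F G v = ∑ l ∈ (G.neighborFinset v).filter (fun u => G.degree u = 1),
      ((G.degree v : ℝ) * (G.degree l : ℝ))⁻¹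
      + ∑ l ∈ (G.neighborFinset v).filter (fun u => ¬ G.degree u = 1),
      ((G.degree v : ℝ) * (G.degree l : ℝ))⁻¹ := hsplit.symm
  rw [hF, hB]
  set b := ((B G v).card : ℝ) with hb
  set c := (((G.neighborFinset v).filter (fun u => ¬ G.degree u = 1)).card : ℝ)
  have hkey : b * ((G.degree v : ℝ))⁻¹ + c * (2 * (G.degree v : ℝ))⁻¹
      = 1/2 + b * (2 * (G.degree v : ℝ))⁻¹ := by
    field_simp
    linear_combination hcardsR
  linarith [hC, hkey]

private lemma B_term_le (hiso : ∀ v, 0 < G.degree v) {v : V} (hv : v ∈ T G) :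
    ((B G v).card : ℝ) * (2 * (G.degree v : ℝ))⁻¹ ≤ ((B G v).card : ℝ) / 4 := by
  by_cases h1 : G.degree v = 1
  · rw [B_empty_of_deg_one G hv h1]
    simp
  · have h2 : 2 ≤ G.degree v := by have := hiso v; omega
    have h2R : (2:ℝ) ≤ (G.degree v : ℝ) := by exact_mod_cast h2
    have hinv : (2 * (G.degree v : ℝ))⁻¹ ≤ 1/4 := by
      rw [show (1:ℝ)/4 = (4:ℝ)⁻¹ by norm_num]
      exact inv_anti₀ (by norm_num) (by linarith)
    calc ((B G v).card : ℝ) * (2 * (G.degree v : ℝ))⁻¹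
        ≤ ((B G v).card : ℝ) * (1/4) :=
          mul_le_mul_of_nonneg_left hinv (Nat.cast_nonneg _)
      _ = ((B G v).card : ℝ) / 4 := by ring

private lemma sum_F_odd (hiso : ∀ v, 0 < G.degree v) (hodd : Odd (Fintype.card V)) :
    ∑ v, F G v ≤ (Fintype.card V : ℝ) - 1 := by
  have hT : (T G).Nonempty := by
    rw [Finset.nonempty_iff_ne_empty]
    intro h
    have hall : ∀ v, G.degree v = 1 := by
      intro v
      have hv : v ∉ T G := h ▸ Finset.notMem_empty v
      rw [T, Finset.mem_filter, not_and] at hv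
      have := hv (Finset.mem_univ v)
      push_neg at this
      exact this.1
    have h2 := G.sum_degrees_eq_twice_card_edges
    have h3 : ∑ v, G.degree v = Fintype.card V := by
      simp [hall, Finset.card_univ]
    obtain ⟨k, hk⟩ := hodd
    omega
  have h3card := card_T_ge_three G hiso hT
  have hLf : ((T G).filter (fun u => G.degree u = 1)).card < (T G).card := by
    obtain ⟨v, hvT, hv2⟩ := exists_deg_two G hiso hT
    refine Finset.card_lt_card ?_
    rw [Finset.ssubset_iff_of_subset (Finset.filter_subset _ _)]
    exact ⟨v, hvT, fun hmem => by
      rw [Finset.mem_filter] at hmem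
      omega⟩
  -- real abbreviations
  set n : ℝ := (Fintype.card V : ℝ) with hn
  set t : ℝ := ((T G).card : ℝ) with ht
  have htn : (T G).card ≤ Fintype.card V := by
    rw [← Finset.card_univ]; exact Finset.card_le_card (Finset.subset_univ _)
  have hsplit := Finset.sum_add_sum_compl (T G) (F G)
  have hcompl : ∑ v ∈ (T G)ᶜ, F G v ≤ n - t := by
    calc ∑ v ∈ (T G)ᶜ, F G v ≤ ∑ _v ∈ (T G)ᶜ, (1:ℝ) :=
          Finset.sum_le_sum fun v _ => F_le_one G hiso v
      _ = ((T G)ᶜ.card : ℝ) := by rw [Finset.sum_const, nsmul_eq_mul, mul_one]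
      _ = n - t := by
          rw [Finset.card_compl, hn, ht, Nat.cast_sub htn]
  have hTsum : ∑ v ∈ T G, F G v ≤ t / 2 + (t - 1) / 4 := by
    have h1 : ∑ v ∈ T G, F G v ≤ ∑ v ∈ T G, (1/2 + ((B G v).card : ℝ) / 4) := by
      refine Finset.sum_le_sum fun v hv => ?_
      have := F_le_half G hiso v
      have := B_term_le G hiso hv
      linarith
    have h2 : ∑ v ∈ T G, (1/2 + ((B G v).card : ℝ) / 4)
        = t / 2 + (∑ v ∈ T G, ((B G v).card : ℝ)) / 4 := by
      rw [Finset.sum_add_distrib, Finset.sum_const, nsmul_eq_mul, Finset.sum_div]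
      ring
    have h3 : ∑ v ∈ T G, ((B G v).card : ℝ) ≤ t - 1 := by
      have hc : (∑ v ∈ T G, (B G v).card : ℕ) ≤ (T G).card - 1 := by
        have := sum_B_le G
        omega
      have hc2 : ((∑ v ∈ T G, (B G v).card : ℕ) : ℝ) ≤ (((T G).card - 1 : ℕ) : ℝ) :=
        Nat.cast_le.mpr hc
      rw [Nat.cast_sum] at hc2
      rw [Nat.cast_sub (by omega), Nat.cast_one] at hc2
      exact hc2
    linarith
  have ht3 : (3:ℝ) ≤ t := by rw [ht]; exact_mod_cast h3card
  calc ∑ v, F G v = ∑ v ∈ T G, F G v + ∑ v ∈ (T G)ᶜ, F G v := hsplit.symm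
    _ ≤ (t / 2 + (t - 1) / 4) + (n - t) := by linarith
    _ ≤ n - 1 := by linarith

end RandicNegOneAux

open RandicNegOneAux in
/-- for a graph `G` of order `n` with no isolated vertices,
`n/(2(n-1)) ≤ R₋₁(G) ≤ ⌊n/2⌋`, with equality in the lower bound iff `G` is complete. -/
theorem randicIndexNegOne_bounds {V : Type} [Fintype V] (G : SimpleGraph V)
    (hiso : ∀ v, 0 < G.degree v) :
    ((Fintype.card V : ℝ) / (2 * ((Fintype.card V : ℝ) - 1)) ≤ randicIndexNegOne G ∧
      randicIndexNegOne G ≤ ((Fintype.card V / 2 : ℕ) : ℝ)) ∧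
    (randicIndexNegOne G = (Fintype.card V : ℝ) / (2 * ((Fintype.card V : ℝ) - 1)) ↔
      G = ⊤) := by
  rcases isEmpty_or_nonempty V with hV | hV
  · have hc : Fintype.card V = 0 := Fintype.card_eq_zero
    have huniv : (Finset.univ : Finset V) = ∅ := Finset.univ_eq_empty
    have hR : randicIndexNegOne G = 0 := by
      rw [randicIndexNegOne, huniv, Finset.sum_empty, mul_zero]
    have htop : G = ⊤ := by
      ext v w
      exact (IsEmpty.false v).elim
    rw [hR, hc]
    refine ⟨⟨by norm_num, by positivity⟩, ?_⟩
    constructor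
    · intro _; exact htop
    · intro _; norm_num
  · have hn2 : 2 ≤ Fintype.card V := by
      obtain ⟨v⟩ := hV
      have h1 := hiso v
      have h2 := G.degree_lt_card_verts v
      omega
    have hn2R : (2:ℝ) ≤ (Fintype.card V : ℝ) := by exact_mod_cast hn2
    have hn1R : (0:ℝ) < (Fintype.card V : ℝ) - 1 := by linarith
    have hRe : randicIndexNegOne G = (1/2) * ∑ k, F G k := by
      rw [randicIndexNegOne]
      congr 1
      exact Finset.sum_congr rfl fun k _ => sum_ite_eq_F G k
    have hconst : ∑ _k : V, ((Fintype.card V : ℝ) - 1)⁻¹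
        = (Fintype.card V : ℝ) * ((Fintype.card V : ℝ) - 1)⁻¹ := by
      rw [Finset.sum_const, Finset.card_univ, nsmul_eq_mul]
    have hb : (Fintype.card V : ℝ) / (2 * ((Fintype.card V : ℝ) - 1))
        = (1/2) * ((Fintype.card V : ℝ) * ((Fintype.card V : ℝ) - 1)⁻¹) := by
      field_simp
    refine ⟨⟨?_, ?_⟩, ?_, ?_⟩
    · -- lower bound
      rw [hRe, hb]
      have hsum : (Fintype.card V : ℝ) * ((Fintype.card V : ℝ) - 1)⁻¹ ≤ ∑ k, F G k := by
        rw [← hconst]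
        exact Finset.sum_le_sum fun k _ => F_lower G hiso k
      linarith
    · -- upper bound
      rw [hRe]
      rcases Nat.even_or_odd (Fintype.card V) with he | ho
      · have hS : ∑ k, F G k ≤ (Fintype.card V : ℝ) := by
          calc ∑ k, F G k ≤ ∑ _k : V, (1:ℝ) := Finset.sum_le_sum fun k _ => F_le_one G hiso k
            _ = (Fintype.card V : ℝ) := by
                rw [Finset.sum_const, Finset.card_univ, nsmul_eq_mul, mul_one]
        obtain ⟨m, hm⟩ := he
        have hq : Fintype.card V / 2 = m := by omega
        have hmR : (Fintype.card V : ℝ) = 2 * m := by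
          rw [hm]; push_cast; ring
        rw [hq]
        linarith
      · have hS := sum_F_odd G hiso ho
        obtain ⟨m, hm⟩ := ho
        have hq : Fintype.card V / 2 = m := by omega
        have hmR : (Fintype.card V : ℝ) = 2 * m + 1 := by
          rw [hm]; push_cast; ring
        rw [hq]
        linarith
    · -- equality implies complete
      intro heq
      by_contra hne
      have hpair : ∃ u w, u ≠ w ∧ ¬ G.Adj u w := by
        by_contra hall
        push_neg at hall
        apply hne
        ext u w
        simp only [SimpleGraph.top_adj]
        exact ⟨fun h => G.ne_of_adj h, fun h => hall u w h⟩
      obtain ⟨u, w, hne', hnadj⟩ := hpair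
      have hdu : (G.degree u : ℝ) < (Fintype.card V : ℝ) - 1 := by
        have hsub : G.neighborFinset u ⊆ (Finset.univ.erase w).erase u := by
          intro x hx
          have hadj := (G.mem_neighborFinset u x).mp hx
          refine Finset.mem_erase.mpr ⟨fun h => G.irrefl (h ▸ hadj),
            Finset.mem_erase.mpr ⟨fun h => hnadj (h ▸ hadj), Finset.mem_univ x⟩⟩
        have hcard : G.degree u ≤ Fintype.card V - 2 := by
          rw [← G.card_neighborFinset_eq_degree]
          have hle := Finset.card_le_card hsub
          have hmem : u ∈ Finset.univ.erase w := Finset.mem_erase.mpr ⟨hne', Finset.mem_univ u⟩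
          rw [Finset.card_erase_of_mem hmem, Finset.card_erase_of_mem (Finset.mem_univ w),
            Finset.card_univ] at hle
          omega
        have : ((Fintype.card V - 2 : ℕ) : ℝ) = (Fintype.card V : ℝ) - 2 := by
          rw [Nat.cast_sub hn2]; norm_num
        have hcR : (G.degree u : ℝ) ≤ (Fintype.card V : ℝ) - 2 := by
          rw [← this]; exact_mod_cast hcard
        linarith
      obtain ⟨k, hk⟩ : (G.neighborFinset u).Nonempty := by
        rw [← Finset.card_pos, G.card_neighborFinset_eq_degree]; exact hiso u
      have hadj : G.Adj k u := ((G.mem_neighborFinset u k).mp hk).symm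
      have hstrict : ∑ _k' : V, ((Fintype.card V : ℝ) - 1)⁻¹ < ∑ k', F G k' :=
        Finset.sum_lt_sum (fun i _ => F_lower G hiso i)
          ⟨k, Finset.mem_univ k, F_lower_strict G hiso u k hdu hadj⟩
      rw [hconst] at hstrict
      rw [hRe, hb] at heq
      linarith
    · -- complete implies equality
      intro htop
      have hdeg : ∀ w : V, ((G.degree w : ℕ) : ℝ) = (Fintype.card V : ℝ) - 1 := by
        intro w
        rw [degree_of_top G htop w, Nat.cast_sub (by omega), Nat.cast_one]
      have hF : ∀ v : V, F G v = ((Fintype.card V : ℝ) - 1)⁻¹ :=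
        F_const G hn1R hdeg
      rw [hRe, Finset.sum_congr rfl (fun v _ => hF v), Finset.sum_const, Finset.card_univ,
        nsmul_eq_mul, hb]
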